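/- Let (G,f) = der_{θ,b}(G,·) and (H,*) a group with derived n-ary operation h(y₁,...,yₙ) = y₁*···*yₙ. Suppose a ∈ H and φ : (G,·) → (H,*) is a group homomorphism with a^(n-1) = φ(b) and φ∘θ = I_{a⁻¹}∘φ, where I_{a⁻¹}(y) = a*y*a⁻¹. Then ψ(x) = φ(x)*a satisfies ψ(f(x₁,...,xₙ)) = ψ(x₁)*ψ(x₂)*···*ψ(xₙ), i.e., ψ is an n-ary homomorphism (G,f) → der^n(H,*). Conversely, every n-ary homomorphism ψ : (G,f) → der^n(H,*) arises this way with a = ψ(1) and φ(x) = ψ(x)*a⁻¹. -/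

import Mathlib

/-- The `(θ,b)`-derived `n`-ary operation on a group `G`. -/
def derOp {G : Type*} [Group G] (n : ℕ) (θ : MulAut G) (b : G) (x : Fin n → G) : G :=
  (List.ofFn fun i : Fin n => (θ ^ (i : ℕ)) (x i)).prod * b

private lemma conj_prod {H : Type*} [Group H] (a : H) (l : List H) :
    (l.map fun y => a * y * a⁻¹).prod = a * l.prod * a⁻¹ := by
  induction l with
  | nil => simp
  | cons h t ih => simp only [List.map_cons, List.prod_cons, ih]; group

private lemma fwd_key {G H : Type*} [Group G] [Group H] (θ : MulAut G) (φ : G →* H) (a : H)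
    (hφθ : ∀ x : G, φ (θ x) = a * φ x * a⁻¹) :
    ∀ (n : ℕ) (x : Fin n → G),
      (List.ofFn fun i => φ (x i) * a).prod
        = φ ((List.ofFn fun i => (θ ^ (i : ℕ)) (x i)).prod) * a ^ n := by
  intro n
  induction n with
  | zero => intro x; simp
  | succ n ih =>
    intro x
    have hshift := ih fun i => θ (x i.succ)
    have e1 : (fun i : Fin n => (θ ^ (i : ℕ)) (θ (x i.succ)))
        = fun i : Fin n => (θ ^ ((i.succ : Fin (n+1)) : ℕ)) (x i.succ) := by
      funext i
      simp [Fin.val_succ, pow_succ, MulAut.mul_apply]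
    have e2 : (fun i : Fin n => φ (θ (x i.succ)) * a)
        = fun i : Fin n => a * (φ (x i.succ) * a) * a⁻¹ := by
      funext i; rw [hφθ]; group
    rw [e1, e2] at hshift
    have e3 : (List.ofFn fun i : Fin n => a * (φ (x i.succ) * a) * a⁻¹)
        = (List.ofFn fun i : Fin n => φ (x i.succ) * a).map fun y => a * y * a⁻¹ := by
      rw [List.map_ofFn]; rfl
    rw [e3, conj_prod] at hshift
    have e4 : (List.ofFn fun i : Fin n => φ (x i.succ) * a).prod
        = a⁻¹ * (φ ((List.ofFn fun i : Fin n => (θ ^ ((i.succ : Fin (n+1)) : ℕ)) (x i.succ)).prod)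
            * a ^ n) * a := by
      rw [← hshift]; group
    rw [List.ofFn_succ (f := fun i : Fin (n+1) => φ (x i) * a), List.prod_cons, e4,
      List.ofFn_succ (f := fun i : Fin (n+1) => (θ ^ (i : ℕ)) (x i)), List.prod_cons,
      map_mul]
    simp only [Fin.val_zero, pow_zero, MulAut.one_apply, pow_succ]
    group

theorem hom_to_derived_group {G H : Type*} [Group G] [Group H]
    (n : ℕ) (hn : 2 ≤ n) (θ : MulAut G) (b : G) (hb : θ b = b)
    (hconj : ∀ x : G, (θ ^ (n - 1)) x = b * x * b⁻¹) :
    (∀ (φ : G →* H) (a : H), a ^ (n - 1) = φ b →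
      (∀ x : G, φ (θ x) = a * φ x * a⁻¹) →
      ∀ x : Fin n → G,
        φ (derOp n θ b x) * a = (List.ofFn fun i => φ (x i) * a).prod) ∧
    (∀ ψ : G → H,
      (∀ x : Fin n → G, ψ (derOp n θ b x) = (List.ofFn fun i => ψ (x i)).prod) →
      ∃ (φ : G →* H) (a : H),
        a = ψ 1 ∧ (∀ g : G, φ g = ψ g * a⁻¹) ∧ (∀ g : G, ψ g = φ g * a) ∧
        a ^ (n - 1) = φ b ∧ ∀ x : G, φ (θ x) = a * φ x * a⁻¹) := by
  obtain ⟨m, rfl⟩ : ∃ m, n = m + 2 := ⟨n - 2, by omega⟩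
  constructor
  · -- forward direction
    intro φ a ha hφθ x
    have key := fwd_key θ φ a hφθ (m + 2) x
    rw [derOp, map_mul, ← ha]
    have : (m + 2 - 1) + 1 = m + 2 := by omega
    calc φ ((List.ofFn fun i : Fin (m+2) => (θ ^ (i : ℕ)) (x i)).prod) * a ^ (m + 2 - 1) * a
        = φ ((List.ofFn fun i : Fin (m+2) => (θ ^ (i : ℕ)) (x i)).prod) * a ^ (m + 2) := by
          rw [mul_assoc, ← pow_succ, this]
      _ = _ := key.symm
  · -- converse direction
    intro ψ hψ
    set a := ψ 1 with ha
    -- the 2-parameter test vector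
    set v : G → G → Fin (m + 2) → G :=
      fun x y i => if i = 0 then x else if i = 1 then y else 1 with hv
    have hder : ∀ x y : G, derOp (m + 2) θ b (v x y) = x * θ y * b := by
      intro x y
      rw [derOp, List.ofFn_succ, List.ofFn_succ]
      simp [hv, Fin.succ_ne_zero, Fin.succ_succ_ne_one, List.ofFn_const]
    have hval : ∀ x y : G, (List.ofFn fun i => ψ (v x y i)).prod = ψ x * ψ y * a ^ m := by
      intro x y
      rw [List.ofFn_succ, List.ofFn_succ]
      simp [hv, Fin.succ_ne_zero, Fin.succ_succ_ne_one, List.ofFn_const, mul_assoc]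
      rfl
    have E : ∀ x y : G, ψ (x * θ y * b) = ψ x * ψ y * a ^ m := by
      intro x y
      rw [← hder, ← hval]; exact hψ _
    have E1 : ∀ x : G, ψ (x * b) = ψ x * a ^ (m + 1) := by
      intro x
      have := E x 1
      rw [map_one, mul_one, ← ha] at this
      rw [this, pow_succ]; group
    have Eθ : ∀ y : G, ψ (θ y) = a * ψ y * a⁻¹ := by
      intro y
      have h1 := E 1 y
      rw [one_mul, ← ha] at h1
      have h2 := E1 (θ y)
      rw [h2] at h1
      have h3 : ψ (θ y) = a * ψ y * a ^ m * (a ^ (m + 1))⁻¹ := eq_mul_inv_of_mul_eq h1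
      rw [h3, pow_succ]; group
    have Eθinv : ∀ y : G, ψ (θ⁻¹ y) = a⁻¹ * ψ y * a := by
      intro y
      have := Eθ (θ⁻¹ y)
      rw [MulAut.apply_inv_self] at this
      rw [this]; group
    have Emul : ∀ x y : G, ψ (x * y) = ψ x * a⁻¹ * ψ y := by
      intro x y
      have h1 := E x (θ⁻¹ y)
      rw [MulAut.apply_inv_self, Eθinv] at h1
      have h2 := E1 (x * y)
      rw [h1] at h2
      have h3 : ψ (x * y) = ψ x * (a⁻¹ * ψ y * a) * a ^ m * (a ^ (m + 1))⁻¹ :=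
        eq_mul_inv_of_mul_eq h2.symm
      rw [h3, pow_succ]; group
    refine ⟨MonoidHom.mk' (fun g => ψ g * a⁻¹) ?_, a, rfl, fun g => rfl, ?_, ?_, ?_⟩
    · intro x y
      show ψ (x * y) * a⁻¹ = (ψ x * a⁻¹) * (ψ y * a⁻¹)
      rw [Emul]; group
    · intro g; simp
    · -- a ^ (m + 2 - 1) = φ b
      have hb' := E1 1
      rw [one_mul, ← ha] at hb'
      show a ^ (m + 2 - 1) = ψ b * a⁻¹
      rw [hb']
      have : m + 2 - 1 = m + 1 := by omega
      rw [this, pow_succ]; group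
    · intro x
      show ψ (θ x) * a⁻¹ = a * (ψ x * a⁻¹) * a⁻¹
      rw [Eθ]; group
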